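/- If P is a definite clause program and | · | a level mapping such that P is recurrent, then every ground query all of whose instances have the same (finite) level bound terminates: there is no infinite SLD-derivation from a bounded query, under any selection rule. In particular, for the ground program ground(P), every derivation starting from a ground query is finite. -/

import Mathlib

/-- A rule (ground instance of a program clause): a head atom and a list of body atoms. -/
structure GroundRule (α : Type) where
  head : α
  body : List α

/-- The least Herbrand model of a (ground) definite program `P`: the least set of
ground atoms closed under the immediate consequence operator. -/
inductive LHM {α : Type} (P : Set (GroundRule α)) : α → Prop where
  | intro (r : GroundRule α) (hr : r ∈ P) (hb : ∀ b ∈ r.body, LHM P b) : LHM P r.head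

/-- A ground atom `A` is covered by program `P` w.r.t. specification `S`:
there is a ground rule instance with head `A` and all body atoms in `S`. -/
def Covered {α : Type} (P : Set (GroundRule α)) (S : Set α) (A : α) : Prop :=
  ∃ r ∈ P, r.head = A ∧ ∀ b ∈ r.body, b ∈ S

/-- `P` is recurrent w.r.t. the level mapping `lvl`: in every ground rule instance
the level of the head strictly exceeds the level of each body atom. -/
def Recurrent {α : Type} (P : Set (GroundRule α)) (lvl : α → ℕ) : Prop :=
  ∀ r ∈ P, ∀ b ∈ r.body, lvl b < lvl r.head

/-- An infinite (ground) SLD-derivation for program `P`, with explicit selection: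
at step `n` the query `q n = pre n ++ (rule n).head :: post n`, the selected atom
(at position `(pre n).length`) is resolved using rule `rule n`. -/
structure InfDeriv {α : Type} (P : Set (GroundRule α)) where
  q : ℕ → List α
  pre : ℕ → List α
  rule : ℕ → GroundRule α
  post : ℕ → List α
  mem : ∀ n, rule n ∈ P
  eq1 : ∀ n, q n = pre n ++ (rule n).head :: post n
  eq2 : ∀ n, q (n + 1) = pre n ++ (rule n).body ++ post n

/-- An atom occurrence (traced through the derivation from step `n` by the index
function `g`) which is never selected. -/
def UnselectedThread {α : Type} {P : Set (GroundRule α)} (D : InfDeriv P)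
    (n : ℕ) (g : ℕ → ℕ) : Prop :=
  ∀ k, g k < (D.q (n + k)).length ∧ g k ≠ (D.pre (n + k)).length ∧
    g (k + 1) = if g k < (D.pre (n + k)).length then g k
                else g k - 1 + (D.rule (n + k)).body.length

/-- A fair infinite derivation: no atom occurrence stays forever unselected. -/
def FairDeriv {α : Type} {P : Set (GroundRule α)} (D : InfDeriv P) : Prop :=
  ¬ ∃ n g, UnselectedThread D n g

/-- One SLD-resolution step for the ground program `P`: some selected atom of the query
is replaced by the body of a ground rule instance whose head is that atom. -/
def Step {α : Type} (P : Set (GroundRule α)) (q q' : List α) : Prop :=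
  ∃ (q₁ q₂ : List α) (r : GroundRule α),
    r ∈ P ∧ q = q₁ ++ r.head :: q₂ ∧ q' = q₁ ++ r.body ++ q₂

/-- If `P` is recurrent w.r.t. a level mapping, then every (ground, hence bounded) query
terminates: there is no infinite derivation from any ground query, under any selection
rule (selection of the atom at each step is arbitrary). -/
theorem recurrent_terminates {α : Type}
    (P : Set (GroundRule α)) (lvl : α → ℕ)
    (hrec : Recurrent P lvl) :
    ¬ ∃ f : ℕ → List α, ∀ n, Step P (f n) (f (n + 1)) := by
  
  rintro ⟨f, hf⟩
  -- bound on all levels appearing in the derivation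
  set L : ℕ := ((f 0).map lvl).foldr max 0 with hL
  have hL0 : ∀ a ∈ f 0, lvl a ≤ L := by
    intro a ha
    have hmem : lvl a ∈ (f 0).map lvl := List.mem_map_of_mem (f := lvl) ha
    clear_value L
    rw [hL]
    generalize (f 0).map lvl = l at hmem ⊢
    induction l with
    | nil => simp at hmem
    | cons x xs ih =>
      rw [List.mem_cons] at hmem
      simp only [List.foldr_cons]
      rcases hmem with h | h
      · exact h ▸ le_max_left _ _
      · exact le_trans (ih h) (le_max_right _ _)
  have hbound : ∀ n, ∀ a ∈ f n, lvl a ≤ L := by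
    intro n
    induction n with
    | zero => exact hL0
    | succ n ih =>
      obtain ⟨q₁, q₂, r, hrP, he1, he2⟩ := hf n
      intro a ha
      rw [he2] at ha
      simp only [List.mem_append] at ha
      rcases ha with (ha | ha) | ha
      · exact ih a (he1 ▸ (by simp [ha]))
      · have hh : lvl a < lvl r.head := hrec r hrP a ha
        have : lvl r.head ≤ L := ih r.head (he1 ▸ (by simp))
        omega
      · exact ih a (he1 ▸ (by simp [ha]))
  -- the measure: counts of atoms of each level, from high to low
  let cnt : List α → Lex (Fin (L + 1) → ℕ) :=
    fun q => toLex fun i => ((q.map lvl).count (L - i.val))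
  have key : ∀ n, cnt (f (n + 1)) < cnt (f n) := by
    intro n
    obtain ⟨q₁, q₂, r, hrP, he1, he2⟩ := hf n
    have hk : lvl r.head ≤ L := hbound n r.head (he1 ▸ (by simp))
    set k := lvl r.head with hkdef
    refine ⟨⟨L - k, by omega⟩, ?_, ?_⟩
    · -- levels above k are unchanged
      intro j hj
      have hj' : (j : ℕ) < L - k := hj
      have hmk : k < L - (j : ℕ) := by omega
      show ((f (n+1)).map lvl).count (L - j.val) = ((f n).map lvl).count (L - j.val)
      rw [he1, he2]
      simp only [List.map_append, List.map_cons, List.count_append, List.count_cons]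
      have hbody : ((r.body.map lvl)).count (L - j.val) = 0 := by
        rw [List.count_eq_zero]
        intro hmem
        obtain ⟨b, hb, hbe⟩ := List.mem_map.1 hmem
        have := hrec r hrP b hb
        omega
      have hne : ¬ (k = L - j.val) := by omega
      simp [hbody, hne, ← hkdef]
    · -- at level k the count strictly decreases
      show ((f (n+1)).map lvl).count (L - (L - k)) < ((f n).map lvl).count (L - (L - k))
      have hLk : L - (L - k) = k := by omega
      rw [hLk, he1, he2]
      simp only [List.map_append, List.map_cons, List.count_append, List.count_cons]
      have hbody : ((r.body.map lvl)).count k = 0 := by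
        rw [List.count_eq_zero]
        intro hmem
        obtain ⟨b, hb, hbe⟩ := List.mem_map.1 hmem
        have := hrec r hrP b hb
        omega
      simp [hbody, ← hkdef]
  -- contradiction with well-foundedness of the lexicographic order
  have hwf : WellFounded ((· < ·) : Lex (Fin (L + 1) → ℕ) → Lex (Fin (L + 1) → ℕ) → Prop) :=
    (Pi.Lex.wellFoundedLT).wf
  exact (RelEmbedding.natGT (fun n => cnt (f n)) key).not_wellFounded hwf
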